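/- arXiv:1602.06726 — 7 statements merged into one kernel-verified Lean document; each statement's English description precedes it below -/
import Mathlib

section
/- If a + b is odd, gcd(a,b) = 1, and a² + 3b² = c³ for some positive integer c, then a + b√−3 is a cube in ℤ[√−3], i.e., a + b√−3 = (e + f√−3)³ for some integers e, f. -/
set_option maxHeartbeats 1000000

open NumberField IsCyclotomicExtension.Rat.Three

lemma evenY_aux (x y : ℤ) : Even (3*x^2*y - 3*x*y^2) := by
  rcases Int.even_or_odd x with ⟨k, hk⟩ | ⟨k, hk⟩ <;>
    rcases Int.even_or_odd y with ⟨m, hm⟩ | ⟨m, hm⟩ <;> subst hk hm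
  · exact ⟨6*k*m*(k+k-(m+m)), by ring⟩
  · exact ⟨3*k*((k+k)-(2*m+1))*(2*m+1), by ring⟩
  · exact ⟨3*(2*k+1)*m*((2*k+1)-(m+m)), by ring⟩
  · exact ⟨3*(2*k+1)*(2*m+1)*(k-m), by ring⟩

theorem stmt_5 (a b : ℤ) (c : ℕ) (ha : a ≠ 0) (hb : b ≠ 0) (hc : 0 < c)
    (hodd : Odd (a + b)) (hcop : Int.gcd a b = 1)
    (hcube : a ^ 2 + 3 * b ^ 2 = (c : ℤ) ^ 3) :
    ∃ e f : ℤ, (⟨a, b⟩ : Zsqrtd (-3)) = (⟨e, f⟩ : Zsqrtd (-3)) ^ 3 := by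
  suffices hsuf : ∃ e f : ℤ, a = e^3 - 9*e*f^2 ∧ b = 3*e^2*f - 3*f^3 by
    obtain ⟨e, f, hae, hbf⟩ := hsuf
    exact ⟨e, f, by ext <;> simp [pow_succ, Zsqrtd.re_mul, Zsqrtd.im_mul, hae, hbf] <;> ring⟩
  -- ℤ preliminaries
  have hcopZ : IsCoprime a b := Int.isCoprime_iff_gcd_eq_one.mpr hcop
  have hoddc : Odd ((c : ℤ)) := by
    have h1 : Odd ((c:ℤ)^3) := by
      rw [← hcube]
      rcases Int.even_or_odd a with hA | hA
      · have hB : Odd b := by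
          rcases Int.even_or_odd b with hB | hB
          · exact absurd (hA.add hB) (Int.not_even_iff_odd.mpr hodd)
          · exact hB
        have h3 : Odd (3:ℤ) := ⟨1, by norm_num⟩
        have h3b : Odd (3*b^2) := h3.mul hB.pow
        have ha2 : Even (a^2) := hA.pow_of_ne_zero (by norm_num)
        exact ha2.add_odd h3b
      · have ha2 : Odd (a^2) := hA.pow
        have hB : Even b := by
          rcases Int.even_or_odd b with hB | hB
          · exact hB
          · exact absurd (hA.add_odd hB) (Int.not_even_iff_odd.mpr hodd)
        have h3b : Even (3*b^2) := (hB.pow_of_ne_zero (by norm_num)).mul_left 3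
        exact ha2.add_even h3b
    rcases Int.odd_pow.mp h1 with h | h
    · exact h
    · norm_num at h
  have hc2 : ¬ (2:ℤ) ∣ (c:ℤ) := by
    rcases hoddc with ⟨k, hk⟩; rintro ⟨m, hm⟩; omega
  have hc3 : ¬ (3:ℤ) ∣ (c:ℤ) := by
    rintro ⟨k, hk⟩
    have hp3 : Prime (3:ℤ) := Int.prime_three
    have h3a : (3:ℤ) ∣ a := by
      refine hp3.dvd_of_dvd_pow (n := 2) ⟨9*k^3 - b^2, ?_⟩
      linear_combination hcube + ((c:ℤ)^2 + 3*(c:ℤ)*k + 9*k^2)*hk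
    obtain ⟨a1, ha1⟩ := h3a
    have h3b : (3:ℤ) ∣ b := by
      refine hp3.dvd_of_dvd_pow (n := 2) ⟨3*k^3 - a1^2, ?_⟩
      have h9 : 3*b^2 = 27*k^3 - 9*a1^2 := by
        linear_combination hcube + ((c:ℤ)^2 + 3*(c:ℤ)*k + 9*k^2)*hk - (a + 3*a1)*ha1
      linarith
    have hu3 : IsUnit (3:ℤ) := hcopZ.isUnit_of_dvd' ⟨a1, ha1⟩ h3b
    norm_num [Int.isUnit_iff] at hu3
  have hcop6 : IsCoprime (6:ℤ) ((c:ℤ)^3) := by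
    have h2 : IsCoprime (2:ℤ) (c:ℤ) := (Int.prime_two.coprime_iff_not_dvd).mpr hc2
    have h3 : IsCoprime (3:ℤ) (c:ℤ) := (Int.prime_three.coprime_iff_not_dvd).mpr hc3
    have h6 : IsCoprime (6:ℤ) (c:ℤ) := by
      have := h2.mul_left h3
      norm_num at this
      exact this
    exact h6.pow_right
  -- the third cyclotomic field
  let K := CyclotomicField 3 ℚ
  haveI : IsCyclotomicExtension {3} ℚ K := CyclotomicField.isCyclotomicExtension 3 ℚ
  have : NumberField K := IsCyclotomicExtension.numberField {3} ℚ K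
  have hpid : IsPrincipalIdealRing (𝓞 K) := IsCyclotomicExtension.Rat.three_pid K
  letI := UniqueFactorizationMonoid.toGCDMonoid (𝓞 K)
  have hζ := IsCyclotomicExtension.zeta_spec 3 ℚ K
  set η : 𝓞 K := hζ.toInteger with hηdef
  have hη3 : η ^ 3 = 1 := hζ.toInteger_cube_eq_one
  have hη2 : η ^ 2 = -η - 1 := by
    have := eta_sq hζ
    rwa [coe_eta] at this
  have hcomp : ∀ m n : ℤ, (m : 𝓞 K) + (n : 𝓞 K) * η = 0 → m = 0 ∧ n = 0 := by
    intro m n h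
    have hK : (m : K) + (n : K) * (IsCyclotomicExtension.zeta 3 ℚ K) = 0 := by
      have h' := congrArg (algebraMap (𝓞 K) K) h
      simp only [map_add, map_mul, map_intCast, map_zero] at h'
      rwa [show (algebraMap (𝓞 K) K) η = IsCyclotomicExtension.zeta 3 ℚ K from rfl] at h'
    set ζ := IsCyclotomicExtension.zeta 3 ℚ K with hζdef
    have hzsq : ζ ^ 2 + ζ + 1 = 0 := by
      have h3 : ζ ^ 3 = 1 := hζ.pow_eq_one
      have hne : ζ ≠ 1 := hζ.ne_one (by norm_num)
      have hfac : (ζ - 1) * (ζ ^ 2 + ζ + 1) = 0 := by linear_combination h3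
      rcases mul_eq_zero.mp hfac with h'' | h''
      · exact absurd (sub_eq_zero.mp h'') hne
      · exact h''
    have hZ : m^2 - m*n + n^2 = 0 := by
      have hKK : ((m^2 - m*n + n^2 : ℤ) : K) = 0 := by
        push_cast
        linear_combination (n:K)^2 * hzsq + ((m:K) - (n:K)*ζ - (n:K)) * hK - (Int.cast_mul m n : ((m*n:ℤ):K) = m*n)
      exact_mod_cast hKK
    constructor <;> nlinarith [sq_nonneg (m+n), sq_nonneg (m-n), sq_nonneg m, sq_nonneg n]
  have hcomp' : ∀ m n m' n' : ℤ, (m : 𝓞 K) + (n : 𝓞 K) * η = (m' : 𝓞 K) + (n' : 𝓞 K) * η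
      → m = m' ∧ n = n' := by
    intro m n m' n' h
    have := hcomp (m - m') (n - n') (by push_cast; linear_combination h)
    constructor <;> omega
  -- decomposition in the power basis 1, η
  have hdec : ∀ z : 𝓞 K, ∃ x y : ℤ, z = (x : 𝓞 K) + (y : 𝓞 K) * η := by
    intro z
    obtain ⟨g, hgdeg, hg⟩ := hζ.integralPowerBasis.exists_eq_aeval z
    rw [hζ.integralPowerBasis_dim] at hgdeg
    norm_num [Nat.totient_prime (by norm_num : Nat.Prime 3)] at hgdeg
    obtain ⟨p, q, hpq⟩ := Polynomial.exists_eq_X_add_C_of_natDegree_le_one (by omega : g.natDegree ≤ 1)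
    refine ⟨q, p, ?_⟩
    rw [hg, hpq, hζ.integralPowerBasis_gen]
    simp only [map_add, map_mul, map_intCast, Polynomial.aeval_X, Polynomial.aeval_C,
      algebraMap_int_eq, eq_intCast]
    ring
  -- cube formula
  have hpow : ∀ x y : ℤ, ((x : 𝓞 K) + (y : 𝓞 K) * η)^3
      = ((x^3 + y^3 - 3*x*y^2 : ℤ) : 𝓞 K) + ((3*x^2*y - 3*x*y^2 : ℤ) : 𝓞 K) * η := by
    intro x y
    push_cast
    linear_combination ((3:𝓞 K)*(x:𝓞 K)*(y:𝓞 K)^2 + (y:𝓞 K)^3*(η - 1)) * hη2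
  -- α and its conjugate
  set θ : 𝓞 K := 2*η + 1 with hθdef
  have hθsq : θ^2 = -3 := by rw [hθdef]; linear_combination (4:𝓞 K) * hη2
  set α : 𝓞 K := (a : 𝓞 K) + (b : 𝓞 K) * θ with hαdef
  set α' : 𝓞 K := (a : 𝓞 K) - (b : 𝓞 K) * θ with hα'def
  have hmul : α * α' = ((c:ℕ) : 𝓞 K)^3 := by
    have h1 : ((a:𝓞 K)^2 + 3*(b:𝓞 K)^2) = ((c:ℕ) : 𝓞 K)^3 := by
      exact_mod_cast congrArg (fun z : ℤ => (z : 𝓞 K)) hcube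
    rw [hαdef, hα'def]
    linear_combination h1 - (b:𝓞 K)^2 * hθsq
  have hαη : α = (a : 𝓞 K) + (b : 𝓞 K) + 2*(b : 𝓞 K)*η := by
    rw [hαdef, hθdef]; ring
  -- gcd of α and α' is a unit
  have hgcd : IsUnit (gcd α α') := by
    have hdα : gcd α α' ∣ α := gcd_dvd_left _ _
    have hdα' : gcd α α' ∣ α' := gcd_dvd_right _ _
    have hd2a : gcd α α' ∣ ((2*a : ℤ) : 𝓞 K) := by
      have h : ((2*a : ℤ) : 𝓞 K) = α + α' := by rw [hαdef, hα'def]; push_cast; ring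
      rw [h]; exact dvd_add hdα hdα'
    have hd6b : gcd α α' ∣ ((6*b : ℤ) : 𝓞 K) := by
      have h : ((6*b : ℤ) : 𝓞 K) = (α - α') * (-θ) := by
        rw [hαdef, hα'def]; push_cast
        linear_combination (2*(b:𝓞 K)) * hθsq
      rw [h]; exact (dvd_sub hdα hdα').mul_right _
    have hd6 : gcd α α' ∣ (6 : 𝓞 K) := by
      obtain ⟨u0, v0, huv⟩ := hcopZ
      have h6 : (6 : 𝓞 K) = ((2*a:ℤ) : 𝓞 K) * ((3*u0 : ℤ) : 𝓞 K) + ((6*b:ℤ) : 𝓞 K) * ((v0 : ℤ) : 𝓞 K) := by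
        have hc' := congrArg (fun z : ℤ => (z : 𝓞 K)) huv
        push_cast at hc' ⊢
        linear_combination (-6 : 𝓞 K) * hc'
      rw [h6]
      exact dvd_add (hd2a.mul_right _) (hd6b.mul_right _)
    have hdc : gcd α α' ∣ ((c:ℕ) : 𝓞 K)^3 := hmul ▸ hdα.mul_right α'
    obtain ⟨x0, y0, hxy0⟩ := hcop6
    have h1 : (1 : 𝓞 K) = (6 : 𝓞 K) * ((x0:ℤ) : 𝓞 K) + ((c:ℕ) : 𝓞 K)^3 * ((y0:ℤ) : 𝓞 K) := by
      have hc' := congrArg (fun z : ℤ => (z : 𝓞 K)) hxy0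
      push_cast at hc' ⊢
      linear_combination -hc'
    exact isUnit_of_dvd_one (h1 ▸ dvd_add (hd6.mul_right _) (hdc.mul_right _))
  obtain ⟨δ, u, hu⟩ := exists_associated_pow_of_mul_eq_pow hgcd hmul
  -- decompose δ
  obtain ⟨x, y, hxy⟩ := hdec δ
  set X : ℤ := x^3 + y^3 - 3*x*y^2 with hXdef
  set Y : ℤ := 3*x^2*y - 3*x*y^2 with hYdef
  have hδ3 : δ^3 = (X : 𝓞 K) + (Y : 𝓞 K) * η := by rw [hxy]; exact hpow x y
  have hYeven : Even Y := evenY_aux x y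
  have hoddab : ¬ Even (a + b) := Int.not_even_iff_odd.mpr hodd
  -- classify the unit and get γ with γ^3 = α
  have humem := Units.mem hζ u
  have hγ : ∃ x' y' : ℤ, ((x' : 𝓞 K) + (y' : 𝓞 K) * η)^3 = α := by
    fin_cases humem
    · refine ⟨x, y, ?_⟩
      rw [← hxy]
      simpa using hu
    · refine ⟨-x, -y, ?_⟩
      have h : ((-x:ℤ) : 𝓞 K) + ((-y:ℤ) : 𝓞 K) * η = -δ := by rw [hxy]; push_cast; ring
      rw [h, show (-δ)^3 = δ^3 * (-1) by ring]
      simpa using hu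
    · exfalso
      rw [hδ3, coe_eta hζ, ← hηdef] at hu
      have hcompeq := hcomp' (-Y) (X - Y) (a+b) (2*b) (by
        push_cast
        linear_combination hu + hαη - (Y : 𝓞 K)*hη2)
      obtain ⟨k, hk⟩ := hYeven
      have h1 := hcompeq.1
      exact hoddab ⟨-k, by omega⟩
    · exfalso
      rw [hδ3, Units.val_neg, coe_eta hζ, ← hηdef] at hu
      have hcompeq := hcomp' Y (Y - X) (a+b) (2*b) (by
        push_cast
        linear_combination hu + hαη + (Y : 𝓞 K)*hη2)
      obtain ⟨k, hk⟩ := hYeven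
      have h1 := hcompeq.1
      exact hoddab ⟨k, by omega⟩
    · exfalso
      rw [hδ3, Units.val_pow_eq_pow_val, coe_eta hζ, ← hηdef] at hu
      have hcompeq := hcomp' (Y - X) (-X) (a+b) (2*b) (by
        push_cast
        linear_combination hu + hαη - ((X : 𝓞 K) + (Y : 𝓞 K)*(η - 1))*hη2)
      obtain ⟨k, hk⟩ := hYeven
      have h1 := hcompeq.1
      have h2 := hcompeq.2
      exact hoddab ⟨k + b, by omega⟩
    · exfalso
      rw [hδ3, Units.val_neg, Units.val_pow_eq_pow_val, coe_eta hζ, ← hηdef] at hu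
      have hcompeq := hcomp' (X - Y) X (a+b) (2*b) (by
        push_cast
        linear_combination hu + hαη + ((X : 𝓞 K) + (Y : 𝓞 K)*(η - 1))*hη2)
      obtain ⟨k, hk⟩ := hYeven
      have h1 := hcompeq.1
      have h2 := hcompeq.2
      exact hoddab ⟨b - k, by omega⟩
  obtain ⟨x', y', hγ3⟩ := hγ
  -- rotate so that the η-coefficient is even
  have hrot : ∃ s t : ℤ, Even t ∧ ((s : 𝓞 K) + (t : 𝓞 K) * η)^3 = α := by
    rcases Int.even_or_odd y' with hy' | hy'
    · exact ⟨x', y', hy', hγ3⟩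
    · rcases Int.even_or_odd x' with hx' | hx'
      · refine ⟨y' - x', -x', hx'.neg, ?_⟩
        have hrel : ((y' - x' : ℤ) : 𝓞 K) + ((-x' : ℤ) : 𝓞 K) * η
            = η^2 * ((x' : 𝓞 K) + (y' : 𝓞 K) * η) := by
          push_cast
          linear_combination (-((x':𝓞 K) + (y':𝓞 K)*(η - 1)))*hη2
        rw [hrel, mul_pow, ← pow_mul, show 2*3 = 3*2 by ring, pow_mul, hη3, one_pow, one_mul, hγ3]
      · refine ⟨-y', x' - y', hx'.sub_odd hy', ?_⟩
        have hrel : ((-y' : ℤ) : 𝓞 K) + ((x' - y' : ℤ) : 𝓞 K) * η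
            = η * ((x' : 𝓞 K) + (y' : 𝓞 K) * η) := by
          push_cast
          linear_combination (-(y':𝓞 K))*hη2
        rw [hrel, mul_pow, hη3, one_mul, hγ3]
  obtain ⟨s, t, ⟨t', ht'⟩, hst⟩ := hrot
  rw [hpow s t, hαη] at hst
  have hcompeq := hcomp' (s^3 + t^3 - 3*s*t^2) (3*s^2*t - 3*s*t^2) (a+b) (2*b) (by
    push_cast at hst ⊢
    linear_combination hst)
  have h1 := hcompeq.1
  have h2 := hcompeq.2
  subst ht'
  have hb2 : 2*b = 2*(3*s^2*t' - 6*s*t'^2) := by linear_combination -h2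
  have hbval : b = 3*s^2*t' - 6*s*t'^2 := mul_left_cancel₀ two_ne_zero hb2
  exact ⟨s - t', t', by linear_combination -h1 - hbval, by linear_combination hbval⟩
end

section
/- If a + b is odd, gcd(a,b) = 1, and a² + 3b² = c³ for some positive integer c, then there exist nonzero integers e, f such that a = e(e² − 9f²) and b = 3f(e² − f²); in particular 3 divides b. -/
namespace EisAux

/-- Eisenstein integers: pairs `⟨x, y⟩` representing `x + y ω` with `ω = (-1+√-3)/2`. -/
@[ext]
structure Eis where
  re : ℤ
  im : ℤ
  deriving DecidableEq

namespace Eis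

instance : Zero Eis := ⟨⟨0, 0⟩⟩
instance : One Eis := ⟨⟨1, 0⟩⟩
instance : Add Eis := ⟨fun z w => ⟨z.re + w.re, z.im + w.im⟩⟩
instance : Neg Eis := ⟨fun z => ⟨-z.re, -z.im⟩⟩
instance : Mul Eis :=
  ⟨fun z w => ⟨z.re * w.re - z.im * w.im, z.re * w.im + z.im * w.re - z.im * w.im⟩⟩

@[simp] theorem mk_re (x y : ℤ) : (Eis.mk x y).re = x := rfl
@[simp] theorem mk_im (x y : ℤ) : (Eis.mk x y).im = y := rfl
@[simp] theorem zero_re : (0 : Eis).re = 0 := rfl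
@[simp] theorem zero_im : (0 : Eis).im = 0 := rfl
@[simp] theorem one_re : (1 : Eis).re = 1 := rfl
@[simp] theorem one_im : (1 : Eis).im = 0 := rfl
@[simp] theorem add_re (z w : Eis) : (z + w).re = z.re + w.re := rfl
@[simp] theorem add_im (z w : Eis) : (z + w).im = z.im + w.im := rfl
@[simp] theorem neg_re (z : Eis) : (-z).re = -z.re := rfl
@[simp] theorem neg_im (z : Eis) : (-z).im = -z.im := rfl
@[simp] theorem mul_re (z w : Eis) : (z * w).re = z.re * w.re - z.im * w.im := rfl
@[simp] theorem mul_im (z w : Eis) :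
    (z * w).im = z.re * w.im + z.im * w.re - z.im * w.im := rfl

instance addCommGroup : AddCommGroup Eis := by
  refine
  { add := (· + ·)
    zero := (0 : Eis)
    sub := fun a b => a + -b
    neg := Neg.neg
    nsmul := @nsmulRec Eis ⟨0⟩ ⟨(· + ·)⟩
    zsmul := @zsmulRec Eis ⟨0⟩ ⟨(· + ·)⟩ ⟨Neg.neg⟩ (@nsmulRec Eis ⟨0⟩ ⟨(· + ·)⟩)
    add_assoc := ?_
    zero_add := ?_
    add_zero := ?_
    neg_add_cancel := ?_
    add_comm := ?_ } <;>
  intros <;> ext <;> simp <;> ring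

@[simp] theorem sub_re (z w : Eis) : (z - w).re = z.re - w.re := rfl
@[simp] theorem sub_im (z w : Eis) : (z - w).im = z.im - w.im := rfl

instance addGroupWithOne : AddGroupWithOne Eis :=
  { Eis.addCommGroup with
    natCast := fun n => ⟨n, 0⟩
    intCast := fun n => ⟨n, 0⟩
    one := 1 }

instance commRing : CommRing Eis := by
  refine
  { Eis.addGroupWithOne with
    mul := (· * ·)
    npow := @npowRec Eis ⟨1⟩ ⟨(· * ·)⟩
    add_comm := ?_
    left_distrib := ?_
    right_distrib := ?_
    zero_mul := ?_
    mul_zero := ?_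
    mul_assoc := ?_
    one_mul := ?_
    mul_one := ?_
    mul_comm := ?_ } <;>
  intros <;> ext <;> simp <;> ring

@[simp] theorem natCast_re (n : ℕ) : (n : Eis).re = n := rfl
@[simp] theorem natCast_im (n : ℕ) : (n : Eis).im = 0 := rfl
@[simp] theorem intCast_re (n : ℤ) : (n : Eis).re = n := rfl
@[simp] theorem intCast_im (n : ℤ) : (n : Eis).im = 0 := rfl

@[simp] theorem ofNat_re (n : ℕ) [n.AtLeastTwo] :
    (OfNat.ofNat n : Eis).re = OfNat.ofNat n := rfl
@[simp] theorem ofNat_im (n : ℕ) [n.AtLeastTwo] :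
    (OfNat.ofNat n : Eis).im = 0 := rfl

instance : Nontrivial Eis := ⟨⟨0, 1, by decide⟩⟩

/-- Conjugation. -/
def conj (z : Eis) : Eis := ⟨z.re - z.im, -z.im⟩

@[simp] theorem conj_re (z : Eis) : (conj z).re = z.re - z.im := rfl
@[simp] theorem conj_im (z : Eis) : (conj z).im = -z.im := rfl

/-- The norm. -/
def norm (z : Eis) : ℤ := z.re * z.re - z.re * z.im + z.im * z.im

theorem norm_mul (z w : Eis) : norm (z * w) = norm z * norm w := by
  simp [norm]; ring

theorem norm_nonneg (z : Eis) : 0 ≤ norm z := by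
  have h1 := sq_nonneg (2 * z.re - z.im)
  have h2 := sq_nonneg z.im
  simp only [norm]; nlinarith

theorem norm_eq_zero_iff {z : Eis} : norm z = 0 ↔ z = 0 := by
  constructor
  · intro h
    simp only [norm] at h
    have h4 : (2 * z.re - z.im) ^ 2 + 3 * z.im ^ 2 = 0 := by linear_combination 4 * h
    have h5 : z.im ^ 2 = 0 :=
      le_antisymm (by nlinarith [sq_nonneg (2 * z.re - z.im)]) (sq_nonneg _)
    have him : z.im = 0 := by
      exact pow_eq_zero_iff (two_ne_zero) |>.mp h5
    have hre : z.re = 0 := by nlinarith [h4, him]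
    ext <;> simp [him, hre]
  · rintro rfl; simp [norm]

theorem norm_pos {z : Eis} (hz : z ≠ 0) : 0 < norm z :=
  lt_of_le_of_ne (norm_nonneg z) (fun h => hz (norm_eq_zero_iff.mp h.symm))

instance : NoZeroDivisors Eis := by
  constructor
  intro z w h
  by_contra hzw
  push_neg at hzw
  have := norm_pos hzw.1
  have := norm_pos hzw.2
  have h0 : norm (z * w) = 0 := by rw [h]; simp [norm]
  rw [norm_mul] at h0
  nlinarith

instance : IsDomain Eis := NoZeroDivisors.to_isDomain _

theorem mul_conj (z : Eis) : z * conj z = (norm z : Eis) := by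
  ext <;> simp [norm] <;> ring

instance : Div Eis :=
  ⟨fun x y =>
    ⟨round (((x * conj y).re : ℚ) / (norm y : ℚ)),
     round (((x * conj y).im : ℚ) / (norm y : ℚ))⟩⟩

theorem div_def (x y : Eis) : x / y =
    ⟨round (((x * conj y).re : ℚ) / (norm y : ℚ)),
     round (((x * conj y).im : ℚ) / (norm y : ℚ))⟩ := rfl

instance : Mod Eis := ⟨fun x y => x - y * (x / y)⟩

theorem mod_def (x y : Eis) : x % y = x - y * (x / y) := rfl

theorem norm_mod_lt (x : Eis) {y : Eis} (hy : y ≠ 0) : (x % y).norm < y.norm := by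
  have hn : 0 < norm y := norm_pos hy
  set q : Eis := x / y with hq
  set s : ℤ := (x * conj y).re - q.re * norm y with hs
  set t : ℤ := (x * conj y).im - q.im * norm y with ht
  have key : (x % y).norm * norm y = s ^ 2 - s * t + t ^ 2 := by
    simp only [hs, ht, mod_def, norm, sub_re, sub_im, mul_re, mul_im, conj_re, conj_im]
    ring
  -- bound s
  have hnq : ((norm y : ℤ) : ℚ) ≠ 0 := by exact_mod_cast hn.ne'
  have hbound : ∀ p : ℤ, ∀ r : ℤ, r = round ((p : ℚ) / (norm y : ℚ)) →
      4 * (p - r * norm y) ^ 2 ≤ (norm y) ^ 2 := by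
    intro p r hr
    have h1 : |(p : ℚ) / (norm y : ℚ) - r| ≤ 1 / 2 := by rw [hr]; exact abs_sub_round _
    have h2 : ((p - r * norm y : ℤ) : ℚ) = ((p : ℚ) / (norm y : ℚ) - r) * (norm y : ℚ) := by
      push_cast
      field_simp
    have h3 : |((p - r * norm y : ℤ) : ℚ)| ≤ (norm y : ℚ) / 2 := by
      rw [h2, abs_mul]
      have : |((norm y : ℤ) : ℚ)| = (norm y : ℚ) := abs_of_pos (by exact_mod_cast hn)
      rw [this]
      have hny : (0:ℚ) ≤ (norm y : ℚ) := by positivity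
      calc |(p : ℚ) / (norm y : ℚ) - r| * (norm y : ℚ) ≤ (1/2) * (norm y : ℚ) :=
            mul_le_mul_of_nonneg_right h1 hny
        _ = (norm y : ℚ) / 2 := by ring
    have h5 : |((p - r * norm y : ℤ) : ℚ)| * |((p - r * norm y : ℤ) : ℚ)| ≤
        ((norm y : ℚ) / 2) * ((norm y : ℚ) / 2) :=
      mul_self_le_mul_self (abs_nonneg _) h3
    rw [abs_mul_abs_self] at h5
    have h4 : (4 : ℚ) * ((p - r * norm y : ℤ) : ℚ) ^ 2 ≤ ((norm y : ℤ) : ℚ) ^ 2 := by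
      nlinarith [h5]
    exact_mod_cast h4
  have h4s : 4 * s ^ 2 ≤ (norm y) ^ 2 := by
    apply hbound (x * conj y).re q.re
    rw [hq, div_def]
  have h4t : 4 * t ^ 2 ≤ (norm y) ^ 2 := by
    apply hbound (x * conj y).im q.im
    rw [hq, div_def]
  nlinarith [key, h4s, h4t, hn, sq_nonneg (s + t), sq_nonneg (s - t),
    norm_nonneg (x % y)]

theorem natAbs_norm_mod_lt (x : Eis) {y : Eis} (hy : y ≠ 0) :
    (x % y).norm.natAbs < y.norm.natAbs := by
  have h1 := norm_mod_lt x hy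
  have h2 := norm_nonneg (x % y)
  have h3 := norm_nonneg y
  omega

instance : EuclideanDomain Eis :=
  { Eis.commRing, (inferInstance : Nontrivial Eis) with
    quotient := (· / ·)
    remainder := (· % ·)
    quotient_zero := fun x => by
      simp [div_def, norm]
      rfl
    quotient_mul_add_remainder_eq := fun x y => by
      show y * (x / y) + (x - y * (x / y)) = x
      ring
    r := fun a b => a.norm.natAbs < b.norm.natAbs
    r_wellFounded := (measure (Int.natAbs ∘ norm)).wf
    remainder_lt := fun x y hy => natAbs_norm_mod_lt x hy
    mul_left_not_lt := fun a b hb0 => by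
      simp only [not_lt]
      rw [norm_mul, Int.natAbs_mul]
      exact Nat.le_mul_of_pos_right _
        (Int.natAbs_pos.mpr (fun h => hb0 (norm_eq_zero_iff.mp (by
          rw [← Int.natAbs_eq_zero] at *; exact h)))) }

theorem cube_def (x y : ℤ) :
    (⟨x, y⟩ : Eis) ^ 3 = ⟨x ^ 3 - 3 * x * y ^ 2 + y ^ 3, 3 * x ^ 2 * y - 3 * x * y ^ 2⟩ := by
  ext <;> simp [pow_succ] <;> ring

theorem norm_eq_one_of_isUnit {u : Eis} (h : IsUnit u) : norm u = 1 := by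
  obtain ⟨v, rfl⟩ := h
  have h1 : norm (v : Eis) * norm ((v⁻¹ : Eisˣ) : Eis) = 1 := by
    rw [← norm_mul]
    simp [norm]
  have h2 := norm_nonneg (v : Eis)
  exact Int.eq_one_of_mul_eq_one_right h2 h1

theorem unit_cases {u : Eis} (h : IsUnit u) :
    u = ⟨1, 0⟩ ∨ u = ⟨-1, 0⟩ ∨ u = ⟨0, 1⟩ ∨ u = ⟨0, -1⟩ ∨ u = ⟨-1, -1⟩ ∨ u = ⟨1, 1⟩ := by
  have hn := norm_eq_one_of_isUnit h
  obtain ⟨x, y⟩ := u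
  simp only [norm] at hn
  have hy1 : -1 ≤ y := by nlinarith [sq_nonneg (2 * x - y), sq_nonneg (y + 1), sq_nonneg (y - 1)]
  have hy2 : y ≤ 1 := by nlinarith [sq_nonneg (2 * x - y), sq_nonneg (y + 1), sq_nonneg (y - 1)]
  interval_cases y
  · have hx : x * (x + 1) = 0 := by linear_combination hn
    have h0 : x = 0 ∨ x = -1 := by rcases mul_eq_zero.mp hx with h | h <;> omega
    rcases h0 with rfl | rfl <;> simp
  · have hx : (x - 1) * (x + 1) = 0 := by linear_combination hn
    have h0 : x = 1 ∨ x = -1 := by rcases mul_eq_zero.mp hx with h | h <;> omega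
    rcases h0 with rfl | rfl <;> simp
  · have hx : x * (x - 1) = 0 := by linear_combination hn
    have h0 : x = 0 ∨ x = 1 := by rcases mul_eq_zero.mp hx with h | h <;> omega
    rcases h0 with rfl | rfl <;> simp

end Eis

/-- `x*y*(x-y)` is always even. -/
theorem even_helper (x y : ℤ) : ∃ k : ℤ, x * y * (x - y) = 2 * k := by
  rcases Int.even_or_odd x with ⟨m, hm⟩ | ⟨m, hm⟩
  · exact ⟨m * y * (x - y), by rw [hm]; ring⟩
  · rcases Int.even_or_odd y with ⟨n, hn⟩ | ⟨n, hn⟩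
    · exact ⟨x * n * (x - y), by rw [hn]; ring⟩
    · exact ⟨x * y * (m - n), by rw [hm, hn]; ring⟩

theorem descent_even (a b x y : ℤ) (ha : a ≠ 0) (hb : b ≠ 0)
    (hyeven : ∃ g : ℤ, y = 2 * g)
    (h1 : x ^ 3 - 3 * x * y ^ 2 + y ^ 3 = a + b)
    (h2 : 3 * x ^ 2 * y - 3 * x * y ^ 2 = 2 * b) :
    ∃ e f : ℤ, e ≠ 0 ∧ f ≠ 0 ∧ a = e * (e ^ 2 - 9 * f ^ 2) ∧
      b = 3 * f * (e ^ 2 - f ^ 2) := by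
  obtain ⟨f, rfl⟩ := hyeven
  have hb2 : 2 * b = 2 * (3 * f * ((x - f) ^ 2 - f ^ 2)) := by linear_combination -h2
  have hbeq : b = 3 * f * ((x - f) ^ 2 - f ^ 2) := by linarith
  have haeq : a = (x - f) * ((x - f) ^ 2 - 9 * f ^ 2) := by linear_combination -h1 - hbeq
  refine ⟨x - f, f, ?_, ?_, haeq, hbeq⟩
  · intro h
    rw [h] at haeq
    simp at haeq
    exact ha haeq
  · intro h
    rw [h] at hbeq
    simp at hbeq
    exact hb hbeq

theorem descent_final (a b x y : ℤ) (ha : a ≠ 0) (hb : b ≠ 0)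
    (h1 : x ^ 3 - 3 * x * y ^ 2 + y ^ 3 = a + b)
    (h2 : 3 * x ^ 2 * y - 3 * x * y ^ 2 = 2 * b) :
    ∃ e f : ℤ, e ≠ 0 ∧ f ≠ 0 ∧ a = e * (e ^ 2 - 9 * f ^ 2) ∧
      b = 3 * f * (e ^ 2 - f ^ 2) := by
  rcases Int.even_or_odd y with ⟨n, hn⟩ | ⟨n, hn⟩
  · exact descent_even a b x y ha hb ⟨n, by omega⟩ h1 h2
  · rcases Int.even_or_odd x with ⟨m, hm⟩ | ⟨m, hm⟩
    · -- replace (x, y) by (y - x, -x), which has even second coordinate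
      refine descent_even a b (y - x) (-x) ha hb ⟨-m, by omega⟩ ?_ ?_
      · linear_combination h1
      · linear_combination h2
    · -- x, y both odd: replace (x, y) by (-y, x - y)
      refine descent_even a b (-y) (x - y) ha hb ⟨m - n, by omega⟩ ?_ ?_
      · linear_combination h1
      · linear_combination h2

end EisAux

open EisAux EisAux.Eis

theorem stmt_6 (a b : ℤ) (c : ℕ) (ha : a ≠ 0) (hb : b ≠ 0) (hc : 0 < c)
    (hodd : Odd (a + b)) (hcop : Int.gcd a b = 1)
    (hcube : a ^ 2 + 3 * b ^ 2 = (c : ℤ) ^ 3) :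
    (∃ e f : ℤ, e ≠ 0 ∧ f ≠ 0 ∧ a = e * (e ^ 2 - 9 * f ^ 2) ∧
      b = 3 * f * (e ^ 2 - f ^ 2)) ∧ (3 : ℤ) ∣ b := by
  obtain ⟨m, hm⟩ := hodd
  have hab : IsCoprime a b := Int.isCoprime_iff_gcd_eq_one.mpr hcop
  -- `c` is odd
  have hoddc3 : Odd (a ^ 2 + 3 * b ^ 2) := by
    rcases Int.even_or_odd a with ⟨u, hu⟩ | ⟨u, hu⟩
    · rcases Int.even_or_odd b with ⟨v, hv⟩ | ⟨v, hv⟩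
      · exfalso; omega
      · exact ⟨2 * u ^ 2 + 6 * v ^ 2 + 6 * v + 1, by rw [hu, hv]; ring⟩
    · rcases Int.even_or_odd b with ⟨v, hv⟩ | ⟨v, hv⟩
      · exact ⟨2 * u ^ 2 + 2 * u + 6 * v ^ 2, by rw [hu, hv]; ring⟩
      · exfalso; omega
  have hoddc : Odd (c : ℤ) := by
    have h3 : Odd ((c : ℤ) ^ 3) := hcube ▸ hoddc3
    rcases Int.even_or_odd (c : ℤ) with ⟨w, hw⟩ | hO
    · exfalso
      obtain ⟨r, hr⟩ := h3
      obtain ⟨W, hW⟩ : ∃ W : ℤ, w ^ 3 = W := ⟨_, rfl⟩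
      have h8 : 8 * W = 2 * r + 1 := by rw [← hr, hw]; linear_combination (-8:ℤ) * hW
      omega
    · exact hO
  have hc2 : ¬ (2 : ℤ) ∣ (c : ℤ) := by
    obtain ⟨w, hw⟩ := hoddc
    rintro ⟨d, hd⟩
    omega
  -- `3 ∤ c`
  have h3c : ¬ (3 : ℤ) ∣ (c : ℤ) := by
    intro h3
    have h3a2 : (3 : ℤ) ∣ a ^ 2 := by
      obtain ⟨w, hw⟩ := (dvd_pow h3 (by norm_num) : (3:ℤ) ∣ (c:ℤ) ^ 3)
      exact ⟨w - b ^ 2, by linear_combination hcube + hw⟩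
    have h3a : (3 : ℤ) ∣ a := Int.prime_three.dvd_of_dvd_pow h3a2
    obtain ⟨a', rfl⟩ := h3a
    obtain ⟨c', hc'⟩ := h3
    have h3b2 : (3 : ℤ) ∣ b ^ 2 := by
      refine ⟨3 * c' ^ 3 - a' ^ 2, ?_⟩
      have h9 : 3 * b ^ 2 = 3 * (3 * (3 * c' ^ 3 - a' ^ 2)) := by
        linear_combination hcube + ((c:ℤ) ^ 2 + 3 * (c:ℤ) * c' + 9 * c' ^ 2) * hc'
      exact mul_left_cancel₀ (by norm_num : (3:ℤ) ≠ 0) h9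
    have h3b : (3 : ℤ) ∣ b := Int.prime_three.dvd_of_dvd_pow h3b2
    have hu3 : IsUnit (3 : ℤ) := hab.isUnit_of_dvd' ⟨a', rfl⟩ h3b
    rw [Int.isUnit_iff] at hu3
    omega
  -- Eisenstein integer setup
  have hsq3 : (⟨1, 2⟩ : Eis) ^ 2 = ((-3 : ℤ) : Eis) := by
    have : (⟨1, 2⟩ : Eis) * ⟨1, 2⟩ = ((-3 : ℤ) : Eis) := by decide
    rw [pow_two, this]
  have hAform : (⟨a + b, 2 * b⟩ : Eis) = (a : Eis) + (b : Eis) * ⟨1, 2⟩ := by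
    ext <;> simp <;> ring
  have hA'form : (⟨a - b, -(2 * b)⟩ : Eis) = (a : Eis) - (b : Eis) * ⟨1, 2⟩ := by
    ext <;> simp <;> ring
  have hcubeE : (a : Eis) ^ 2 + 3 * (b : Eis) ^ 2 = ((c : ℤ) : Eis) ^ 3 := by
    have := congrArg (fun n : ℤ => (n : Eis)) hcube
    push_cast at this
    exact this
  have hmulA : (⟨a + b, 2 * b⟩ : Eis) * ⟨a - b, -(2 * b)⟩ = ((c : ℤ) : Eis) ^ 3 := by
    rw [hAform, hA'form]
    linear_combination (-((b:Eis) ^ 2)) * hsq3 + hcubeE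
  have hcop6 : IsCoprime ((c : ℤ) ^ 3) (6 : ℤ) := by
    have h2' : IsCoprime ((c : ℤ)) (2 : ℤ) := ((Int.prime_two.coprime_iff_not_dvd).mpr hc2).symm
    have h3' : IsCoprime ((c : ℤ)) (3 : ℤ) := ((Int.prime_three.coprime_iff_not_dvd).mpr h3c).symm
    exact ((show (6:ℤ) = 2 * 3 by norm_num) ▸ h2'.mul_right h3').pow_left
  obtain ⟨s, t, hst⟩ := hcop6
  obtain ⟨p, q, hpq⟩ := id hab
  have hpqE : (p : Eis) * a + (q : Eis) * b = 1 := by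
    have := congrArg (fun n : ℤ => (n : Eis)) hpq
    push_cast at this
    exact this
  have hstE : (s : Eis) * ((c : ℤ) : Eis) ^ 3 + (t : Eis) * 6 = 1 := by
    have := congrArg (fun n : ℤ => (n : Eis)) hst
    push_cast at this
    exact this
  have hcopA : IsCoprime (⟨a + b, 2 * b⟩ : Eis) (⟨a - b, -(2 * b)⟩ : Eis) := by
    refine ⟨(s : Eis) * ⟨a - b, -(2 * b)⟩ + (t : Eis) * (3 * (p : Eis) - (q : Eis) * ⟨1, 2⟩),
      (t : Eis) * (3 * (p : Eis) + (q : Eis) * ⟨1, 2⟩), ?_⟩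
    rw [hAform, hA'form]
    linear_combination (-((s:Eis) * (b:Eis) ^ 2) - 2 * (t:Eis) * (q:Eis) * (b:Eis)) * hsq3 +
      hstE + (s : Eis) * hcubeE + 6 * (t : Eis) * hpqE
  obtain ⟨β, hassoc⟩ := exists_associated_pow_of_mul_eq_pow' hcopA hmulA
  obtain ⟨u, hu⟩ := hassoc
  obtain ⟨x, y⟩ := β
  rw [Eis.cube_def] at hu
  rcases Eis.unit_cases u.isUnit with hcase | hcase | hcase | hcase | hcase | hcase <;>
    rw [hcase] at hu <;>
    [skip; skip; skip; skip; skip; skip] <;>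
    (have h1 := congrArg Eis.re hu) <;> (have h2 := congrArg Eis.im hu) <;>
    simp only [Eis.mul_re, Eis.mul_im, Eis.mk_re, Eis.mk_im] at h1 h2
  · -- u = 1
    have hex := descent_final a b x y ha hb (by linear_combination h1) (by linear_combination h2)
    refine ⟨hex, ?_⟩
    obtain ⟨e, f, _, _, _, hbeq⟩ := hex
    exact ⟨f * (e ^ 2 - f ^ 2), by rw [hbeq]; ring⟩
  · -- u = -1
    have hex := descent_final a b (-x) (-y) ha hb (by linear_combination h1)
      (by linear_combination h2)
    refine ⟨hex, ?_⟩
    obtain ⟨e, f, _, _, _, hbeq⟩ := hex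
    exact ⟨f * (e ^ 2 - f ^ 2), by rw [hbeq]; ring⟩
  · -- u = ω : impossible
    exfalso
    obtain ⟨k, hk⟩ := even_helper x y
    have hE : a + b = -3 * (x * y * (x - y)) := by linear_combination -h1
    rw [hk] at hE
    omega
  · -- u = -ω : impossible
    exfalso
    obtain ⟨k, hk⟩ := even_helper x y
    have hE : a + b = 3 * (x * y * (x - y)) := by linear_combination -h1
    rw [hk] at hE
    omega
  · -- u = ω² : impossible
    exfalso
    obtain ⟨k, hk⟩ := even_helper x y
    have hE : a - b = 3 * (x * y * (x - y)) := by linear_combination -h1 + h2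
    rw [hk] at hE
    omega
  · -- u = -ω² : impossible
    exfalso
    obtain ⟨k, hk⟩ := even_helper x y
    have hE : a - b = -3 * (x * y * (x - y)) := by linear_combination -h1 + h2
    rw [hk] at hE
    omega
end

section
/- There are no nonzero integers p, q, θ with p + q odd and gcd(p,q) = 1 such that 2p(p² + 3q²) = θ³. -/
theorem stmt_8 : ¬ ∃ p q θ : ℤ, p ≠ 0 ∧ q ≠ 0 ∧ θ ≠ 0 ∧ Odd (p + q) ∧
    Int.gcd p q = 1 ∧ 2 * p * (p ^ 2 + 3 * q ^ 2) = θ ^ 3 := by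
  rintro ⟨p, q, θ, hp, hq, hθ, hodd, -, h⟩
  have flt : FermatLastTheoremWith ℤ 3 :=
    fermatLastTheoremFor_iff_int.mp fermatLastTheoremThree
  have hpq : p + q ≠ 0 := by
    rintro h0
    exact (Int.not_odd_iff_even.mpr (by simp [h0])) hodd
  have hpq' : p - q ≠ 0 := by
    rintro h0
    have : p = q := by linarith
    subst this
    exact (Int.not_odd_iff_even.mpr ⟨p, by ring⟩) hodd
  exact flt (p + q) (p - q) θ hpq hpq' hθ (by ring_nf; linarith [h])
end

section
/- For any integers p, q with p ≠ 0 and q ≠ p², the number 12q³ − 3p⁶ is not a perfect square in ℤ. -/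
theorem stmt_11 (p q : ℤ) (hp : p ≠ 0) (hq : q ≠ p ^ 2) :
    ¬ ∃ r : ℤ, 12 * q ^ 3 - 3 * p ^ 6 = r ^ 2 := by
  rintro ⟨r, hr⟩
  have flt := fermatLastTheoremFor_iff_int.mp fermatLastTheoremThree
  have hodd : Odd 3 := ⟨1, rfl⟩
  have hq0 : q ≠ 0 := by
    rintro rfl
    nlinarith [sq_nonneg r, pow_pos (pow_two_pos_of_ne_zero hp) 3, sq_nonneg (p^3)]
  have key : ∀ s : ℤ, s = r ∨ s = -r → 3 * p ^ 3 + s ≠ 0 := by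
    rintro s hs h
    apply hq
    have hs2 : s ^ 2 = r ^ 2 := by rcases hs with rfl | rfl <;> ring
    have hsv : s = -(3 * p ^ 3) := by linarith
    subst hsv
    have h12 : (12:ℤ) * q ^ 3 = 12 * (p ^ 2) ^ 3 := by linear_combination hr - hs2
    have h3 : q ^ 3 = (p ^ 2) ^ 3 := mul_left_cancel₀ (by norm_num) h12
    exact ((Odd.strictMono_pow hodd).injective h3)
  have ha : 3 * p ^ 3 + r ≠ 0 := key r (Or.inl rfl)
  have hb : 3 * p ^ 3 - r ≠ 0 := by
    have := key (-r) (Or.inr rfl)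
    intro h; apply this; linarith
  have hc : 6 * p * q ≠ 0 := by positivity
  exact flt _ _ _ ha hb hc (by linear_combination -18 * p ^ 3 * hr)
end

section
/- The Diophantine equation 9x³ = zy³ + z² + 6xyz has no solution with x, y, z all nonzero integers. -/
theorem stmt_12 : ¬ ∃ x y z : ℤ, x ≠ 0 ∧ y ≠ 0 ∧ z ≠ 0 ∧
    9 * x ^ 3 = z * y ^ 3 + z ^ 2 + 6 * x * y * z := by
  rintro ⟨x, y, z, hx, hy, hz, h⟩
  set v : ℤ := 2 * z + y ^ 3 + 6 * x * y with hvdef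
  have hv : 3 * v ^ 2 + y ^ 6 = 4 * (3 * x + y ^ 2) ^ 3 := by
    rw [hvdef]; linear_combination -12 * h
  have cube_inj : Function.Injective fun a : ℤ => a ^ 3 :=
    (Odd.strictMono_pow (by decide)).injective
  have hA : y ^ 3 + v ≠ 0 := by
    intro h0
    have hv' : v = -y ^ 3 := by linarith
    rw [hv'] at hv
    have h2 : (y ^ 2) ^ 3 = (3 * x + y ^ 2) ^ 3 := by linarith [hv]; 
    have := cube_inj h2
    exact hx (by linarith)
  have hB : y ^ 3 - v ≠ 0 := by
    intro h0
    have hv' : v = y ^ 3 := by linarith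
    rw [hv'] at hv
    have h2 : (y ^ 2) ^ 3 = (3 * x + y ^ 2) ^ 3 := by linarith [hv]
    have := cube_inj h2
    exact hx (by linarith)
  have hC : 2 * y * (3 * x + y ^ 2) ≠ 0 := by
    intro h0
    have hm : 3 * x + y ^ 2 = 0 := by
      rcases mul_eq_zero.mp h0 with h1 | h1
      · rcases mul_eq_zero.mp h1 with h2 | h2
        · norm_num at h2
        · exact absurd h2 hy
      · exact h1
    rw [hm] at hv
    have : y ^ 6 ≤ 0 := by nlinarith [sq_nonneg v]
    have h6 : y ^ 6 = 0 := le_antisymm this (by positivity)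
    exact hy (pow_eq_zero_iff (by norm_num)|>.mp h6)
  have key : (y ^ 3 + v) ^ 3 + (y ^ 3 - v) ^ 3 = (2 * y * (3 * x + y ^ 2)) ^ 3 := by
    linear_combination 2 * y ^ 3 * hv
  exact (fermatLastTheoremFor_iff_int.mp fermatLastTheoremThree)
    (y ^ 3 + v) (y ^ 3 - v) (2 * y * (3 * x + y ^ 2)) hA hB hC key
end

section
/- There are no nonzero integers a, b, c satisfying (a + b + c)³ = 24abc (equivalently, ((a+b+c)/2)³ = 3abc). -/
private lemma cube_inj (x y : ℤ) (h : x ^ 3 = y ^ 3) : x = y :=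
  (Odd.strictMono_pow (R := ℤ) ⟨1, by norm_num⟩).injective h

theorem stmt_13 : ¬ ∃ a b c : ℤ, a ≠ 0 ∧ b ≠ 0 ∧ c ≠ 0 ∧
    (a + b + c) ^ 3 = 24 * (a * b * c) := by
  rintro ⟨a, b, c, ha, hb, hc, h⟩
  have flt : FermatLastTheoremWith ℤ 3 :=
    fermatLastTheoremFor_iff_int.mp fermatLastTheoremThree
  -- key identity: with p = -a+b+c, q = a-b+c, r = a+b-c we have p³+q³+r³ = (a+b+c)³-24abc = 0
  have heq0 : (-a + b + c) ^ 3 + (a - b + c) ^ 3 + (a + b - c) ^ 3 = 0 := by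
    linear_combination h
  have hp : (-a + b + c) ≠ 0 := by
    intro hp
    have : (a - b + c) = -(a + b - c) := cube_inj _ _ (by
      linear_combination heq0 - (-a + b + c) ^ 2 * hp)
    exact ha (by linarith)
  have hq : (a - b + c) ≠ 0 := by
    intro hq
    have : (-a + b + c) = -(a + b - c) := cube_inj _ _ (by
      linear_combination heq0 - (a - b + c) ^ 2 * hq)
    exact hb (by linarith)
  have hr : (a + b - c) ≠ 0 := by
    intro hr
    have : (-a + b + c) = -(a - b + c) := cube_inj _ _ (by
      linear_combination heq0 - (a + b - c) ^ 2 * hr)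
    exact hc (by linarith)
  exact flt _ _ _ hp hq (neg_ne_zero.mpr hr)
    (by linear_combination heq0)
end

section
/- Every prime p of the form 6k+1 has a representation p = r² + 3s² with r, s positive integers, and this representation is unique. -/
set_option maxHeartbeats 1000000

private lemma sqrt_neg_three (p : ℕ) (hp : p.Prime) (h1 : p % 6 = 1) :
    ∃ a : ZMod p, a ^ 2 = -3 := by
  haveI : Fact p.Prime := ⟨hp⟩
  have h3 : 3 ∣ Fintype.card (ZMod p)ˣ := by
    rw [ZMod.card_units p]
    omega
  obtain ⟨u, hu⟩ := exists_prime_orderOf_dvd_card 3 h3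
  set ω : ZMod p := (u : ZMod p) with hω
  have hu3 : u ^ 3 = 1 := by
    rw [← hu]; exact pow_orderOf_eq_one u
  have hω3 : ω ^ 3 = 1 := by
    rw [hω, ← Units.val_pow_eq_pow_val, hu3, Units.val_one]
  have hωne : ω ≠ 1 := by
    intro h
    have : u = 1 := Units.ext h
    rw [this, orderOf_one] at hu
    omega
  have key : ω ^ 2 + ω + 1 = 0 := by
    have hfac : (ω - 1) * (ω ^ 2 + ω + 1) = 0 := by
      linear_combination hω3
    rcases mul_eq_zero.mp hfac with h | h
    · exact absurd (sub_eq_zero.mp h) hωne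
    · exact h
  exact ⟨2 * ω + 1, by linear_combination 4 * key⟩

private lemma exists_int_rep (p : ℕ) (hp : p.Prime) (h1 : p % 6 = 1) :
    ∃ A B : ℤ, A ≠ 0 ∧ B ≠ 0 ∧ (p : ℤ) = A ^ 2 + 3 * B ^ 2 := by
  haveI : Fact p.Prime := ⟨hp⟩
  obtain ⟨a, ha⟩ := sqrt_neg_three p hp h1
  have hp2 : 2 ≤ p := hp.two_le
  have hane : a ≠ 0 := by
    intro h
    rw [h] at ha
    have h30 : ((3 : ℕ) : ZMod p) = 0 := by push_cast; linear_combination ha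
    have h3 : p ∣ 3 := (ZMod.natCast_eq_zero_iff 3 p).mp h30
    have := Nat.le_of_dvd (by norm_num) h3
    omega
  set n := Nat.sqrt p with hn
  have hnp : n ^ 2 < p := by
    rcases lt_or_eq_of_le (Nat.sqrt_le' p) with h | h
    · exact h
    · exfalso
      rw [← hn] at h
      have hdvd : n ∣ p := ⟨n, by rw [← h]; ring⟩
      rcases (Nat.Prime.eq_one_or_self_of_dvd hp n hdvd) with h' | h'
      · rw [h'] at h; norm_num at h; omega
      · rw [h'] at h; nlinarith
  have hpn : p < (n + 1) ^ 2 := Nat.lt_succ_sqrt' p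
  -- pigeonhole
  have hcard : Fintype.card (ZMod p) < Fintype.card (Fin (n + 1) × Fin (n + 1)) := by
    rw [ZMod.card, Fintype.card_prod, Fintype.card_fin]
    nlinarith
  obtain ⟨q1, q2, hqne, hqeq⟩ := Fintype.exists_ne_map_eq_of_card_lt
    (fun q : Fin (n + 1) × Fin (n + 1) => ((q.1 : ℕ) : ZMod p) + a * ((q.2 : ℕ) : ZMod p)) hcard
  set X : ℤ := (q1.1 : ℕ) - ((q2.1 : ℕ) : ℤ) with hX
  set Y : ℤ := (q2.2 : ℕ) - ((q1.2 : ℕ) : ℤ) with hY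
  have hXcast : ((X : ℤ) : ZMod p) = a * ((Y : ℤ) : ZMod p) := by
    rw [hX, hY]
    push_cast
    linear_combination hqeq
  have hXb : X ^ 2 ≤ (n : ℤ) ^ 2 := by
    have h1' : (q1.1 : ℤ) ≤ n := by exact_mod_cast Nat.lt_succ_iff.mp q1.1.isLt
    have h2' : (q2.1 : ℤ) ≤ n := by exact_mod_cast Nat.lt_succ_iff.mp q2.1.isLt
    have h1'' : (0 : ℤ) ≤ q1.1 := Int.natCast_nonneg _
    have h2'' : (0 : ℤ) ≤ q2.1 := Int.natCast_nonneg _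
    rw [hX]; nlinarith
  have hYb : Y ^ 2 ≤ (n : ℤ) ^ 2 := by
    have h1' : (q1.2 : ℤ) ≤ n := by exact_mod_cast Nat.lt_succ_iff.mp q1.2.isLt
    have h2' : (q2.2 : ℤ) ≤ n := by exact_mod_cast Nat.lt_succ_iff.mp q2.2.isLt
    have h1'' : (0 : ℤ) ≤ q1.2 := Int.natCast_nonneg _
    have h2'' : (0 : ℤ) ≤ q2.2 := Int.natCast_nonneg _
    rw [hY]; nlinarith
  have hnontriv : ¬(X = 0 ∧ Y = 0) := by
    rintro ⟨hx0, hy0⟩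
    apply hqne
    rw [hX] at hx0
    rw [hY] at hy0
    have e1 : (q1.1 : ℕ) = q2.1 := by omega
    have e2 : (q1.2 : ℕ) = q2.2 := by omega
    exact Prod.ext (Fin.ext e1) (Fin.ext e2)
  have hnpZ : (n : ℤ) ^ 2 < p := by exact_mod_cast hnp
  have hYne : Y ≠ 0 := by
    intro hy0
    rw [hy0] at hXcast
    rw [Int.cast_zero, mul_zero] at hXcast
    have hpX : (p : ℤ) ∣ X := (ZMod.intCast_zmod_eq_zero_iff_dvd X p).mp hXcast
    have hXne : X ≠ 0 := fun h => hnontriv ⟨h, hy0⟩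
    have h1' : (p : ℤ) ≤ |X| := Int.le_of_dvd (abs_pos.mpr hXne) ((dvd_abs _ _).mpr hpX)
    nlinarith [abs_nonneg X, sq_abs X, Int.natCast_nonneg p]
  have hXne : X ≠ 0 := by
    intro hx0
    rw [hx0, Int.cast_zero] at hXcast
    rcases mul_eq_zero.mp hXcast.symm with h | h
    · exact hane h
    · have hpY : (p : ℤ) ∣ Y := (ZMod.intCast_zmod_eq_zero_iff_dvd Y p).mp h
      have h1' : (p : ℤ) ≤ |Y| := Int.le_of_dvd (abs_pos.mpr hYne) ((dvd_abs _ _).mpr hpY)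
      nlinarith [abs_nonneg Y, sq_abs Y, Int.natCast_nonneg p]
  set N : ℤ := X ^ 2 + 3 * Y ^ 2 with hNdef
  have hpN : (p : ℤ) ∣ N := by
    rw [← ZMod.intCast_zmod_eq_zero_iff_dvd, hNdef]
    push_cast
    rw [hXcast]
    linear_combination ((Y : ℤ) : ZMod p) ^ 2 * ha
  have hNpos : 0 < N := by
    have hx1 : 1 ≤ X ^ 2 := by
      rcases lt_or_gt_of_ne hXne with h | h <;> nlinarith
    nlinarith [sq_nonneg Y]
  have hNlt : N < 4 * p := by nlinarith
  obtain ⟨m, hm⟩ := hpN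
  have hppos : (0 : ℤ) < p := by exact_mod_cast hp.pos
  have hm1 : 1 ≤ m := by nlinarith
  have hm3 : m ≤ 3 := by nlinarith
  interval_cases m
  · -- N = p
    exact ⟨X, Y, hXne, hYne, by linarith⟩
  · -- N = 2p : impossible mod 4
    exfalso
    have hp4 : p % 4 = 1 ∨ p % 4 = 3 := by omega
    have hpc : ((p : ℕ) : ZMod 4) = 1 ∨ ((p : ℕ) : ZMod 4) = 3 := by
      rcases hp4 with h | h
      · left; rw [← ZMod.natCast_mod, h]; rfl
      · right; rw [← ZMod.natCast_mod, h]; rfl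
    have key : ∀ x y q : ZMod 4, q = 1 ∨ q = 3 → x ^ 2 + 3 * y ^ 2 ≠ q * 2 := by decide
    apply key ((X : ℤ) : ZMod 4) ((Y : ℤ) : ZMod 4) ((p : ℕ) : ZMod 4) hpc
    have : ((N : ℤ) : ZMod 4) = ((p : ℕ) : ZMod 4) * 2 := by
      rw [hm]; push_cast; ring
    rw [hNdef] at this
    push_cast at this ⊢
    linear_combination this
  · -- N = 3p : divide out 3
    have h3X : (3 : ℤ) ∣ X := by
      have hpr : Prime (3 : ℤ) := Int.prime_three
      apply hpr.dvd_of_dvd_pow (n := 2)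
      exact ⟨(p : ℤ) - Y ^ 2, by linarith⟩
    obtain ⟨Z, hZ⟩ := h3X
    have hZne : Z ≠ 0 := by rintro rfl; rw [mul_zero] at hZ; exact hXne hZ
    refine ⟨Y, Z, hYne, hZne, ?_⟩
    have h9 : 9 * Z ^ 2 + 3 * Y ^ 2 = 3 * p := by
      have := hm
      rw [hNdef, hZ] at this
      linarith [this]
    linarith

set_option maxHeartbeats 1000000 in
theorem stmt_18 (p : ℕ) (hp : p.Prime) (h1 : p % 6 = 1) :
    ∃! rs : ℕ × ℕ, 0 < rs.1 ∧ 0 < rs.2 ∧ p = rs.1 ^ 2 + 3 * rs.2 ^ 2 := by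
  obtain ⟨A, B, hA, hB, hrep⟩ := exists_int_rep p hp h1
  refine ⟨(A.natAbs, B.natAbs), ⟨Int.natAbs_pos.mpr hA, Int.natAbs_pos.mpr hB, ?_⟩, ?_⟩
  · have : (p : ℤ) = (A.natAbs : ℤ) ^ 2 + 3 * (B.natAbs : ℤ) ^ 2 := by
      rw [← Int.abs_eq_natAbs, ← Int.abs_eq_natAbs, sq_abs, sq_abs]; exact hrep
    exact_mod_cast this
  · rintro ⟨u, v⟩ ⟨hu, hv, huv⟩
    set r := A.natAbs with hrdef
    set s := B.natAbs with hsdef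
    have hr : 0 < r := Int.natAbs_pos.mpr hA
    have hs : 0 < s := Int.natAbs_pos.mpr hB
    have hrs : p = r ^ 2 + 3 * s ^ 2 := by
      have : (p : ℤ) = (r : ℤ) ^ 2 + 3 * (s : ℤ) ^ 2 := by
        rw [hrdef, hsdef, ← Int.abs_eq_natAbs, ← Int.abs_eq_natAbs, sq_abs, sq_abs]; exact hrep
      exact_mod_cast this
    have cop : ∀ a b : ℕ, 0 < a → 0 < b → p = a ^ 2 + 3 * b ^ 2 → Nat.Coprime a b := by
      intro a b ha hb hab
      set d := Nat.gcd a b with hd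
      have hda : d ∣ a := Nat.gcd_dvd_left a b
      have hdb : d ∣ b := Nat.gcd_dvd_right a b
      have hd2 : d ^ 2 ∣ p := by
        rw [hab]
        exact dvd_add (pow_dvd_pow_of_dvd hda 2) (Dvd.dvd.mul_left (pow_dvd_pow_of_dvd hdb 2) 3)
      rcases (Nat.Prime.eq_one_or_self_of_dvd hp _ hd2) with h | h
      · have hle : d ≤ 1 := by nlinarith
        have hge : 1 ≤ d := by nlinarith
        unfold Nat.Coprime
        omega
      · exfalso
        have hddvdp : d ∣ p := dvd_trans (dvd_pow_self d (by norm_num : 2 ≠ 0)) hd2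
        rcases (Nat.Prime.eq_one_or_self_of_dvd hp _ hddvdp) with h' | h'
        · rw [h'] at h; have := hp.two_le; omega
        · rw [h'] at h
          have := hp.two_le
          nlinarith
    have main : ∀ a b c e : ℕ, 0 < a → 0 < b → 0 < c → 0 < e →
        p = a ^ 2 + 3 * b ^ 2 → p = c ^ 2 + 3 * e ^ 2 → a = c ∧ b = e := by
      intro a b c e ha hb hc he hab hce
      have hcop1 : Nat.Coprime a b := cop a b ha hb hab
      have hcop2 : Nat.Coprime c e := cop c e hc he hce
      have hpZ : Prime (p : ℤ) := Int.prime_iff_natAbs_prime.mpr (by simpa using hp)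
      have hab' : (p : ℤ) = (a : ℤ) ^ 2 + 3 * (b : ℤ) ^ 2 := by exact_mod_cast hab
      have hce' : (p : ℤ) = (c : ℤ) ^ 2 + 3 * (e : ℤ) ^ 2 := by exact_mod_cast hce
      have key : (p : ℤ) ∣ ((a : ℤ) * e - b * c) * ((a : ℤ) * e + b * c) := by
        have hkey : ((a : ℤ) * e - b * c) * ((a : ℤ) * e + b * c) = (p : ℤ) * ((e : ℤ) ^ 2 - b ^ 2) := by
          linear_combination (b : ℤ) ^ 2 * hce' - (e : ℤ) ^ 2 * hab'
        exact ⟨_, hkey⟩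
      have hppos : (0 : ℤ) < p := by exact_mod_cast hp.pos
      rcases hpZ.dvd_mul.mp key with hdvd | hdvd
      · have haebc : (a : ℤ) * e = b * c := by
          by_contra hne
          have h0 : (a : ℤ) * e - b * c ≠ 0 := fun h => hne (by linarith [sub_eq_zero.mp h])
          have hle : (p : ℤ) ≤ |(a : ℤ) * e - b * c| :=
            Int.le_of_dvd (abs_pos.mpr h0) ((dvd_abs _ _).mpr hdvd)
          have hid : (p : ℤ) ^ 2 = ((a : ℤ) * c + 3 * b * e) ^ 2 + 3 * ((a : ℤ) * e - b * c) ^ 2 := by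
            linear_combination (p : ℤ) * hce' + ((c : ℤ) ^ 2 + 3 * (e : ℤ) ^ 2) * hab'
          nlinarith [sq_abs ((a : ℤ) * e - b * c), sq_nonneg ((a : ℤ) * c + 3 * b * e),
            abs_nonneg ((a : ℤ) * e - b * c)]
        have haebcN : a * e = b * c := by exact_mod_cast haebc
        have hac : a ∣ c := by
          have : a ∣ b * c := ⟨e, haebcN.symm⟩
          exact Nat.Coprime.dvd_of_dvd_mul_left hcop1 this
        have hca : c ∣ a := by
          have : c ∣ e * a := ⟨b, by rw [mul_comm e a, haebcN]; ring⟩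
          exact Nat.Coprime.dvd_of_dvd_mul_left hcop2 this
        have hace : a = c := Nat.dvd_antisymm hac hca
        refine ⟨hace, ?_⟩
        subst hace
        have : a * e = a * b := by rw [haebcN]; ring
        exact (Nat.eq_of_mul_eq_mul_left ha this).symm
      · exfalso
        have hpos : (0 : ℤ) < (a : ℤ) * e + b * c := by positivity
        have hle : (p : ℤ) ≤ (a : ℤ) * e + b * c := Int.le_of_dvd hpos hdvd
        have hid : (p : ℤ) ^ 2 = ((a : ℤ) * c - 3 * b * e) ^ 2 + 3 * ((a : ℤ) * e + b * c) ^ 2 := by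
          linear_combination (p : ℤ) * hce' + ((c : ℤ) ^ 2 + 3 * (e : ℤ) ^ 2) * hab'
        nlinarith [sq_nonneg ((a : ℤ) * c - 3 * b * e)]
    obtain ⟨h1', h2'⟩ := main u v r s hu hv hr hs huv hrs
    exact Prod.ext h1' h2'
end
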